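/- For every ε > 0 and δ > 0 there exist real polynomials Q₁ and Q₂ with Q₁(x) ≤ g(x) ≤ Q₂(x) for all x ∈ [0,1], such that for every Borel measure μ on (0,∞) with ∫_0^∞ e^{−x} dμ(x) < ∞: ∫_0^∞ [Q₂(e^{−x}) − g(e^{−x})] dμ(x) ≤ ε ∫_0^∞ e^{−x} dμ(x) + μ((1−δ, 1+δ)) and ∫_0^∞ [g(e^{−x}) − Q₁(e^{−x})] dμ(x) ≤ ε ∫_0^∞ e^{−x} dμ(x) + μ((1−δ, 1+δ)). -/

import Mathlib

open Set Filter Topology Real MeasureTheory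

/-- The indicator function of the interval `[e⁻¹, 1]`. -/
noncomputable def gInd : ℝ → ℝ := Set.indicator (Set.Icc (Real.exp (-1)) 1) (fun _ => 1)

lemma gInd_nonneg (y : ℝ) : 0 ≤ gInd y :=
  Set.indicator_nonneg (fun _ _ => zero_le_one) y

lemma gInd_le_one (y : ℝ) : gInd y ≤ 1 :=
  Set.indicator_le_self' (fun _ _ => zero_le_one) y

lemma gInd_of_lt {y : ℝ} (h : y < Real.exp (-1)) : gInd y = 0 :=
  Set.indicator_of_notMem (fun hm => absurd hm.1 (not_le.2 h)) _

lemma gInd_of_mem {y : ℝ} (h1 : Real.exp (-1) ≤ y) (h2 : y ≤ 1) : gInd y = 1 :=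
  Set.indicator_of_mem (Set.mem_Icc.mpr ⟨h1, h2⟩) _

/-- Pointwise sandwich construction. -/
lemma exists_sandwich (ε δ : ℝ) (hε : 0 < ε) (hδ0 : 0 < δ) (hδ1 : δ ≤ 1) :
    ∃ Q₁ Q₂ : Polynomial ℝ,
      (∀ x ∈ Set.Icc (0:ℝ) 1, Q₁.eval x ≤ gInd x ∧ gInd x ≤ Q₂.eval x) ∧
      (∀ x : ℝ, 0 < x → Q₂.eval (Real.exp (-x)) - gInd (Real.exp (-x))
          ≤ ε * Real.exp (-x)
            + Set.indicator (Set.Ioo (1-δ) (1+δ)) (fun _ => (1:ℝ)) x) ∧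
      (∀ x : ℝ, 0 < x → gInd (Real.exp (-x)) - Q₁.eval (Real.exp (-x))
          ≤ ε * Real.exp (-x)
            + Set.indicator (Set.Ioo (1-δ) (1+δ)) (fun _ => (1:ℝ)) x) := by
  set a := Real.exp (-(1+δ/2)) with ha_def
  set b := Real.exp (-1) with hb_def
  set c := Real.exp (-(1-δ/2)) with hc_def
  have hb0 : 0 < b := Real.exp_pos _
  have ha0 : 0 < a := Real.exp_pos _
  have hc0 : 0 < c := Real.exp_pos _
  have hab : a < b := Real.exp_lt_exp.2 (by linarith)
  have hbc : b < c := Real.exp_lt_exp.2 (by linarith)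
  have hc1 : c < 1 := by
    rw [hc_def]
    calc Real.exp (-(1-δ/2)) < Real.exp 0 := Real.exp_lt_exp.2 (by linarith)
      _ = 1 := Real.exp_zero
  have hbinv : (1:ℝ)/b = Real.exp 1 := by
    rw [hb_def, Real.exp_neg]
    simp
  -- envelope functions
  set M : ℝ → ℝ := fun y => 1 / max y b with hM_def
  set f₂ : ℝ → ℝ := fun y => max 0 (min (Real.exp 1 * ((y - a)/(b - a))) (M y)) with hf₂_def
  set f₁ : ℝ → ℝ := fun y => max 0 (min ((y - b)/((c - b) * c)) (M y)) with hf₁_def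
  have hMb : ∀ y : ℝ, 0 < max y b := fun y => lt_max_of_lt_right hb0
  have hM_nonneg : ∀ y : ℝ, 0 ≤ M y := fun y => by
    rw [hM_def]; positivity
  have hMeq : ∀ y : ℝ, b ≤ y → M y = 1/y := fun y hy => by
    rw [hM_def]; simp [max_eq_left hy]
  have hyM : ∀ y : ℝ, y * M y ≤ 1 := fun y => by
    rw [hM_def, mul_one_div]
    exact (div_le_one (hMb y)).2 (le_max_left _ _)
  -- facts about f₂
  have hf₂_nonneg : ∀ y : ℝ, 0 ≤ f₂ y := fun y => le_max_left _ _
  have hf₂_le_M : ∀ y : ℝ, f₂ y ≤ M y := fun y =>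
    max_le (hM_nonneg y) (min_le_right _ _)
  have hf₂_zero : ∀ y : ℝ, y ≤ a → f₂ y = 0 := by
    intro y hy
    have h1 : (y - a)/(b - a) ≤ 0 :=
      div_nonpos_iff.2 (Or.inr ⟨by linarith, by linarith⟩)
    have h2 : Real.exp 1 * ((y - a)/(b - a)) ≤ 0 :=
      mul_nonpos_iff.2 (Or.inl ⟨(Real.exp_pos 1).le, h1⟩)
    exact max_eq_left (le_trans (min_le_left _ _) h2)
  have hf₂_eq : ∀ y : ℝ, b ≤ y → f₂ y = 1/y := by
    intro y hy
    have hy0 : 0 < y := lt_of_lt_of_le hb0 hy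
    have hL : (1:ℝ)/y ≤ Real.exp 1 * ((y - a)/(b - a)) := by
      have h1 : (1:ℝ)/y ≤ 1/b := one_div_le_one_div_of_le hb0 hy
      have h2 : (1:ℝ) ≤ (y - a)/(b - a) := (one_le_div (by linarith)).2 (by linarith)
      calc (1:ℝ)/y ≤ 1/b := h1
        _ = Real.exp 1 * 1 := by rw [hbinv, mul_one]
        _ ≤ Real.exp 1 * ((y - a)/(b - a)) := by
            exact mul_le_mul_of_nonneg_left h2 (Real.exp_pos 1).le
    have hge : (1:ℝ)/y ≤ f₂ y :=
      le_trans (le_min hL (by rw [hMeq y hy])) (le_max_right _ _)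
    have hle : f₂ y ≤ 1/y := by
      have := hf₂_le_M y
      rwa [hMeq y hy] at this
    linarith
  -- facts about f₁
  have hf₁_nonneg : ∀ y : ℝ, 0 ≤ f₁ y := fun y => le_max_left _ _
  have hf₁_le_M : ∀ y : ℝ, f₁ y ≤ M y := fun y =>
    max_le (hM_nonneg y) (min_le_right _ _)
  have hf₁_zero : ∀ y : ℝ, y ≤ b → f₁ y = 0 := by
    intro y hy
    have h1 : (y - b)/((c - b) * c) ≤ 0 :=
      div_nonpos_iff.2 (Or.inr ⟨by linarith, mul_nonneg (by linarith) hc0.le⟩)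
    exact max_eq_left (le_trans (min_le_left _ _) h1)
  have hf₁_eq : ∀ y : ℝ, c ≤ y → f₁ y = 1/y := by
    intro y hy
    have hy0 : 0 < y := lt_of_lt_of_le hc0 hy
    have hby : b ≤ y := le_of_lt (lt_of_lt_of_le hbc hy)
    have hcb0 : (0:ℝ) < (c - b) * c := mul_pos (by linarith) hc0
    have hL : (1:ℝ)/y ≤ (y - b)/((c - b) * c) := by
      have h1 : (1:ℝ)/y ≤ 1/c := one_div_le_one_div_of_le hc0 hy
      have h2 : (1:ℝ)/c = (c - b)/((c - b) * c) := by
        field_simp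
        rw [div_self (sub_ne_zero.2 hbc.ne')]
      have h3 : (c - b)/((c - b) * c) ≤ (y - b)/((c - b) * c) :=
        div_le_div_of_nonneg_right (by linarith) hcb0.le
      linarith
    have hge : (1:ℝ)/y ≤ f₁ y :=
      le_trans (le_min hL (by rw [hMeq y hby])) (le_max_right _ _)
    have hle : f₁ y ≤ 1/y := by
      have := hf₁_le_M y
      rwa [hMeq y hby] at this
    linarith
  -- continuity
  have hMcont : Continuous M := by
    rw [hM_def]
    exact continuous_const.div (continuous_id.max continuous_const)
      (fun y => (hMb y).ne')
  have hf₂cont : Continuous f₂ := by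
    rw [hf₂_def]
    exact continuous_const.max
      ((continuous_const.mul ((continuous_id.sub continuous_const).div_const _)).min hMcont)
  have hf₁cont : Continuous f₁ := by
    rw [hf₁_def]
    exact continuous_const.max
      (((continuous_id.sub continuous_const).div_const _).min hMcont)
  -- polynomial approximations
  obtain ⟨p₂, hp₂⟩ := exists_polynomial_near_of_continuousOn 0 1
    (fun y => f₂ y + ε/2) ((hf₂cont.add continuous_const).continuousOn)
    (ε/2) (by linarith)
  obtain ⟨p₁, hp₁⟩ := exists_polynomial_near_of_continuousOn 0 1
    (fun y => f₁ y - ε/2) ((hf₁cont.sub continuous_const).continuousOn)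
    (ε/2) (by linarith)
  have hp₂' : ∀ y ∈ Set.Icc (0:ℝ) 1, f₂ y ≤ p₂.eval y ∧ p₂.eval y ≤ f₂ y + ε := by
    intro y hy
    have := abs_lt.1 (hp₂ y hy)
    constructor <;> linarith [this.1, this.2]
  have hp₁' : ∀ y ∈ Set.Icc (0:ℝ) 1, f₁ y - ε ≤ p₁.eval y ∧ p₁.eval y ≤ f₁ y := by
    intro y hy
    have := abs_lt.1 (hp₁ y hy)
    constructor <;> linarith [this.1, this.2]
  refine ⟨Polynomial.X * p₁, Polynomial.X * p₂, ?_, ?_, ?_⟩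
  · -- sandwich on [0,1]
    intro y hy
    obtain ⟨hy0, hy1⟩ := hy
    constructor
    · rw [Polynomial.eval_mul, Polynomial.eval_X]
      have h1 : y * p₁.eval y ≤ y * f₁ y :=
        mul_le_mul_of_nonneg_left (hp₁' y ⟨hy0, hy1⟩).2 hy0
      refine le_trans h1 ?_
      rcases le_or_gt y b with hyb | hyb
      · rw [hf₁_zero y hyb, mul_zero]
        exact gInd_nonneg y
      · rw [gInd_of_mem hyb.le hy1]
        exact le_trans (mul_le_mul_of_nonneg_left (hf₁_le_M y) hy0) (hyM y)
    · rw [Polynomial.eval_mul, Polynomial.eval_X]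
      have h1 : y * f₂ y ≤ y * p₂.eval y :=
        mul_le_mul_of_nonneg_left (hp₂' y ⟨hy0, hy1⟩).1 hy0
      refine le_trans ?_ h1
      rcases lt_or_ge y b with hyb | hyb
      · rw [gInd_of_lt hyb]
        exact mul_nonneg hy0 (hf₂_nonneg y)
      · rw [gInd_of_mem hyb hy1, hf₂_eq y hyb,
          mul_one_div, div_self (lt_of_lt_of_le hb0 hyb).ne']
  · -- upper bound for Q₂
    intro x hx
    set y := Real.exp (-x) with hy_def
    have hy0 : 0 < y := Real.exp_pos _
    have hy1 : y < 1 := by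
      rw [hy_def]
      calc Real.exp (-x) < Real.exp 0 := Real.exp_lt_exp.2 (by linarith)
        _ = 1 := Real.exp_zero
    rw [Polynomial.eval_mul, Polynomial.eval_X]
    have hup : y * p₂.eval y ≤ y * f₂ y + ε * y := by
      have := mul_le_mul_of_nonneg_left (hp₂' y ⟨hy0.le, hy1.le⟩).2 hy0.le
      nlinarith
    by_cases hxS : x ∈ Set.Ioo (1-δ) (1+δ)
    · rw [Set.indicator_of_mem hxS]
      have h1 : y * f₂ y ≤ 1 :=
        le_trans (mul_le_mul_of_nonneg_left (hf₂_le_M y) hy0.le) (hyM y)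
      have h2 := gInd_nonneg y
      linarith
    · rw [Set.indicator_of_notMem hxS]
      rw [Set.mem_Ioo, not_and_or, not_lt, not_lt] at hxS
      rcases hxS with h | h
      · -- x ≤ 1 - δ, so y ≥ exp (-(1-δ)) ≥ b
        have hyb : b ≤ y := by
          rw [hy_def, hb_def]
          exact Real.exp_le_exp.2 (by linarith)
        rw [hf₂_eq y hyb, mul_one_div, div_self hy0.ne'] at hup
        rw [gInd_of_mem hyb hy1.le]
        linarith
      · -- x ≥ 1 + δ, so y ≤ exp (-(1+δ)) ≤ a
        have hya : y ≤ a := by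
          rw [hy_def, ha_def]
          exact Real.exp_le_exp.2 (by linarith)
        have hyb : y < b := lt_of_le_of_lt hya hab
        rw [hf₂_zero y hya, mul_zero] at hup
        rw [gInd_of_lt hyb]
        linarith
  · -- lower bound for Q₁
    intro x hx
    set y := Real.exp (-x) with hy_def
    have hy0 : 0 < y := Real.exp_pos _
    have hy1 : y < 1 := by
      rw [hy_def]
      calc Real.exp (-x) < Real.exp 0 := Real.exp_lt_exp.2 (by linarith)
        _ = 1 := Real.exp_zero
    rw [Polynomial.eval_mul, Polynomial.eval_X]
    have hlow : y * f₁ y - ε * y ≤ y * p₁.eval y := by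
      have := mul_le_mul_of_nonneg_left (hp₁' y ⟨hy0.le, hy1.le⟩).1 hy0.le
      nlinarith
    by_cases hxS : x ∈ Set.Ioo (1-δ) (1+δ)
    · rw [Set.indicator_of_mem hxS]
      have h1 : 0 ≤ y * f₁ y := mul_nonneg hy0.le (hf₁_nonneg y)
      have h2 := gInd_le_one y
      linarith
    · rw [Set.indicator_of_notMem hxS]
      rw [Set.mem_Ioo, not_and_or, not_lt, not_lt] at hxS
      rcases hxS with h | h
      · -- x ≤ 1 - δ, so y ≥ exp (-(1-δ)) ≥ c
        have hyc : c ≤ y := by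
          rw [hy_def, hc_def]
          exact Real.exp_le_exp.2 (by linarith)
        have hyb : b ≤ y := le_of_lt (lt_of_lt_of_le hbc hyc)
        rw [hf₁_eq y hyc, mul_one_div, div_self hy0.ne'] at hlow
        rw [gInd_of_mem hyb hy1.le]
        linarith
      · -- x ≥ 1 + δ, so y ≤ exp (-(1+δ)) < b
        have hyb : y < b := by
          rw [hy_def, hb_def]
          exact Real.exp_lt_exp.2 (by linarith)
        rw [hf₁_zero y hyb.le, mul_zero] at hlow
        rw [gInd_of_lt hyb]
        linarith

/-- Integral step. -/
lemma lintegral_bound (ε δ : ℝ) (hε : 0 ≤ ε) (μ : Measure ℝ) (hμ : μ (Set.Iic 0) = 0)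
    (h : ℝ → ℝ)
    (hpt : ∀ x : ℝ, 0 < x →
      h x ≤ ε * Real.exp (-x) + Set.indicator (Set.Ioo (1-δ) (1+δ)) (fun _ => (1:ℝ)) x) :
    (∫⁻ x, ENNReal.ofReal (h x) ∂μ)
      ≤ ENNReal.ofReal ε * (∫⁻ x, ENNReal.ofReal (Real.exp (-x)) ∂μ)
        + μ (Set.Ioo (1-δ) (1+δ)) := by
  have hae : ∀ᵐ x ∂μ, 0 < x := by
    rw [ae_iff]
    have : {x : ℝ | ¬ 0 < x} = Set.Iic 0 := by ext x; simp [not_lt]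
    rw [this]
    exact hμ
  have hmeas : Measurable (fun x : ℝ => ENNReal.ofReal (Real.exp (-x))) := by
    fun_prop
  calc ∫⁻ x, ENNReal.ofReal (h x) ∂μ
      ≤ ∫⁻ x, (ENNReal.ofReal ε * ENNReal.ofReal (Real.exp (-x))
          + Set.indicator (Set.Ioo (1-δ) (1+δ)) (fun _ => (1:ENNReal)) x) ∂μ := by
        refine lintegral_mono_ae ?_
        filter_upwards [hae] with x hx
        refine le_trans (ENNReal.ofReal_le_ofReal (hpt x hx)) ?_
        rw [ENNReal.ofReal_add (by positivity)
          (Set.indicator_nonneg (fun _ _ => zero_le_one) x), ENNReal.ofReal_mul hε]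
        gcongr
        by_cases hxS : x ∈ Set.Ioo (1-δ) (1+δ) <;> simp [hxS]
    _ = ENNReal.ofReal ε * (∫⁻ x, ENNReal.ofReal (Real.exp (-x)) ∂μ)
          + μ (Set.Ioo (1-δ) (1+δ)) := by
        rw [lintegral_add_left (hmeas.const_mul _), lintegral_const_mul _ hmeas,
          lintegral_indicator measurableSet_Ioo, setLIntegral_one]

/-- For every `ε > 0` and `δ > 0` there are polynomials `Q₁ ≤ g ≤ Q₂`
on `[0,1]` such that for every Borel measure `μ` on `(0,∞)` with `∫ e^{−x} dμ < ∞`,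
`∫ [Q₂(e^{−x}) − g(e^{−x})] dμ ≤ ε ∫ e^{−x} dμ + μ((1−δ,1+δ))`, and similarly for `Q₁`. -/
theorem stmt_12 :
    ∀ ε > (0 : ℝ), ∀ δ > (0 : ℝ), ∃ Q₁ Q₂ : Polynomial ℝ,
      (∀ x ∈ Set.Icc (0 : ℝ) 1, Q₁.eval x ≤ gInd x ∧ gInd x ≤ Q₂.eval x) ∧
      ∀ μ : Measure ℝ, μ (Set.Iic 0) = 0 →
        (∫⁻ x, ENNReal.ofReal (Real.exp (-x)) ∂μ) < ⊤ →
        ((∫⁻ x, ENNReal.ofReal (Q₂.eval (Real.exp (-x)) - gInd (Real.exp (-x))) ∂μ)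
            ≤ ENNReal.ofReal ε * (∫⁻ x, ENNReal.ofReal (Real.exp (-x)) ∂μ)
              + μ (Set.Ioo (1 - δ) (1 + δ)) ∧
          (∫⁻ x, ENNReal.ofReal (gInd (Real.exp (-x)) - Q₁.eval (Real.exp (-x))) ∂μ)
            ≤ ENNReal.ofReal ε * (∫⁻ x, ENNReal.ofReal (Real.exp (-x)) ∂μ)
              + μ (Set.Ioo (1 - δ) (1 + δ))) := by
  intro ε hε δ hδ
  set δ' := min δ 1 with hδ'_def
  have hδ'0 : 0 < δ' := lt_min hδ one_pos
  have hδ'1 : δ' ≤ 1 := min_le_right _ _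
  have hδ'δ : δ' ≤ δ := min_le_left _ _
  obtain ⟨Q₁, Q₂, hsand, hpt2, hpt1⟩ := exists_sandwich ε δ' hε hδ'0 hδ'1
  refine ⟨Q₁, Q₂, hsand, ?_⟩
  intro μ hμ _
  have hsub : μ (Set.Ioo (1 - δ') (1 + δ')) ≤ μ (Set.Ioo (1 - δ) (1 + δ)) :=
    measure_mono (Set.Ioo_subset_Ioo (by linarith) (by linarith))
  constructor
  · refine le_trans (lintegral_bound ε δ' hε.le μ hμ _ hpt2) ?_
    gcongr
  · refine le_trans (lintegral_bound ε δ' hε.le μ hμ _ hpt1) ?_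
    gcongr
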